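/- arXiv:1204.5334 — 11 statements merged into one kernel-verified Lean document; each statement's English description precedes it below -/
import Mathlib

section
/- Let a₁,b₁,c₁,a₂,b₂,c₂ be nonnegative reals with a₁+b₁+c₁=1 and a₂+b₂+c₂=1. If a₁ ≥ c₁ and a₂ ≥ c₂, then (a₁a₂ + a₁b₂ + a₂b₁) - (c₁c₂ + c₁b₂ + c₂b₁) ≥ ((a₁-c₁)+(a₂-c₂))/2. -/
theorem stmt_2 (a₁ b₁ c₁ a₂ b₂ c₂ : ℝ)
    (ha₁ : 0 ≤ a₁) (hb₁ : 0 ≤ b₁) (hc₁ : 0 ≤ c₁)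
    (ha₂ : 0 ≤ a₂) (hb₂ : 0 ≤ b₂) (hc₂ : 0 ≤ c₂)
    (h1 : a₁ + b₁ + c₁ = 1) (h2 : a₂ + b₂ + c₂ = 1)
    (hac₁ : a₁ ≥ c₁) (hac₂ : a₂ ≥ c₂) :
    (a₁ * a₂ + a₁ * b₂ + a₂ * b₁) - (c₁ * c₂ + c₁ * b₂ + c₂ * b₁) ≥
      ((a₁ - c₁) + (a₂ - c₂)) / 2 := by
  nlinarith [mul_nonneg (sub_nonneg.2 hac₁) (sub_nonneg.2 hac₂), mul_nonneg hb₁ (sub_nonneg.2 hac₂), mul_nonneg hb₂ (sub_nonneg.2 hac₁)]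
end

section
/- Under the setup of the dependent case (a,b,c ≥ 0 summing to 1, row-stochastic conditionals P_{xY}, induced marginals A,B,C, and B > 0 with Q_{Ba} = aP_{aB}/B, Q_{Bc} = cP_{cB}/B), if P_{bA} ≥ P_{bC} and Q_{Ba} ≥ Q_{Bc}, then (aP_{aA}+aP_{aB}+bP_{bA}) − (cP_{cC}+cP_{cB}+bP_{bC}) ≥ ((a−c)+(A−C))/2. -/
theorem stmt_7 (a b c : ℝ)
    (PaA PaB PaC PbA PbB PbC PcA PcB PcC : ℝ)
    (ha : 0 ≤ a) (hb : 0 ≤ b) (hc : 0 ≤ c) (habc : a + b + c = 1)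
    (hPaA : 0 ≤ PaA) (hPaB : 0 ≤ PaB) (hPaC : 0 ≤ PaC)
    (hPbA : 0 ≤ PbA) (hPbB : 0 ≤ PbB) (hPbC : 0 ≤ PbC)
    (hPcA : 0 ≤ PcA) (hPcB : 0 ≤ PcB) (hPcC : 0 ≤ PcC)
    (hra : PaA + PaB + PaC = 1) (hrb : PbA + PbB + PbC = 1)
    (hrc : PcA + PcB + PcC = 1)
    (A : ℝ) (hA : A = a * PaA + b * PbA + c * PcA)
    (B : ℝ) (hB : B = a * PaB + b * PbB + c * PcB)
    (C : ℝ) (hC : C = a * PaC + b * PbC + c * PcC)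
    (hBpos : B > 0)
    (QBa QBc : ℝ) (hQBa : QBa = a * PaB / B) (hQBc : QBc = c * PcB / B)
    (h1 : PbA ≥ PbC) (h2 : QBa ≥ QBc) :
    (a * PaA + a * PaB + b * PbA) - (c * PcC + c * PcB + b * PbC) ≥
      ((a - c) + (A - C)) / 2 := by
  have key : a * PaB ≥ c * PcB := by
    rw [hQBa, hQBc, ge_iff_le, div_le_div_iff₀ hBpos hBpos] at h2
    nlinarith
  have hbd : b * (PbA - PbC) ≥ 0 := mul_nonneg hb (by linarith)
  have hsa : a * (PaA + PaB + PaC) = a := by rw [hra]; ring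
  have hsc : c * (PcA + PcB + PcC) = c := by rw [hrc]; ring
  subst hA hC
  nlinarith [key, hbd, hsa, hsc]
end

section
/- Under the setup of the dependent case (a,b,c ≥ 0 with a+b+c=1, row-stochastic conditionals P_{xY}, induced marginals A,B,C), if b = 0 and B = 0, then (aP_{aA}+aP_{aB}+bP_{bA}) − (cP_{cC}+cP_{cB}+bP_{bC}) = ((a−c)+(A−C))/2. -/
theorem stmt_8 (a b c : ℝ)
    (PaA PaB PaC PbA PbB PbC PcA PcB PcC : ℝ)
    (ha : 0 ≤ a) (hb : 0 ≤ b) (hc : 0 ≤ c) (habc : a + b + c = 1)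
    (hPaA : 0 ≤ PaA) (hPaB : 0 ≤ PaB) (hPaC : 0 ≤ PaC)
    (hPbA : 0 ≤ PbA) (hPbB : 0 ≤ PbB) (hPbC : 0 ≤ PbC)
    (hPcA : 0 ≤ PcA) (hPcB : 0 ≤ PcB) (hPcC : 0 ≤ PcC)
    (hra : PaA + PaB + PaC = 1) (hrb : PbA + PbB + PbC = 1)
    (hrc : PcA + PcB + PcC = 1)
    (A : ℝ) (hA : A = a * PaA + b * PbA + c * PcA)
    (B : ℝ) (hB : B = a * PaB + b * PbB + c * PcB)
    (C : ℝ) (hC : C = a * PaC + b * PbC + c * PcC)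
    (hb0 : b = 0) (hB0 : B = 0) :
    (a * PaA + a * PaB + b * PbA) - (c * PcC + c * PcB + b * PbC) =
      ((a - c) + (A - C)) / 2 := by
  subst hb0 hA hB hC
  have h1 : a * PaB = 0 := by nlinarith [mul_nonneg ha hPaB, mul_nonneg hc hPcB]
  have h2 : c * PcB = 0 := by nlinarith [mul_nonneg ha hPaB, mul_nonneg hc hPcB]
  have ha' : a * (PaA + PaB + PaC) = a * 1 := by rw [hra]
  have hc' : c * (PcA + PcB + PcC) = c * 1 := by rw [hrc]
  nlinarith [ha', hc']
end

section
/- Let Ω be a finite probability space and let h₁, h₂ : Ω → {−1, 0, 1} be independent random variables (representing sign(hᵢ(G) − hᵢ(B))). Define the collective sign s = sign of (h₁ + h₂), and V(X) = P(X = 1) − P(X = −1) for any {−1,0,1}-valued X. If V(h₁) ≥ 0 and V(h₂) ≥ 0, then V(s) ≥ (V(h₁) + V(h₂))/2. -/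
open scoped Classical

/-- Probability of an event on a finite probability space given by weights `p`. -/
noncomputable def Pr {Ω : Type*} [Fintype Ω] (p : Ω → ℝ) (E : Ω → Prop) : ℝ :=
  ∑ ω, if E ω then p ω else 0

/-- Expected payoff of a `{-1,0,1}`-valued random variable under payoffs (+1,0,-1). -/
noncomputable def V {Ω : Type*} [Fintype Ω] (p : Ω → ℝ) (X : Ω → ℤ) : ℝ :=
  Pr p (fun ω => X ω = 1) - Pr p (fun ω => X ω = -1)

theorem stmt_11 {Ω : Type*} [Fintype Ω] (p : Ω → ℝ)
    (hp : ∀ ω, 0 ≤ p ω) (hsum : ∑ ω, p ω = 1)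
    (h₁ h₂ : Ω → ℤ)
    (hr₁ : ∀ ω, h₁ ω = -1 ∨ h₁ ω = 0 ∨ h₁ ω = 1)
    (hr₂ : ∀ ω, h₂ ω = -1 ∨ h₂ ω = 0 ∨ h₂ ω = 1)
    (indep : ∀ x y : ℤ, Pr p (fun ω => h₁ ω = x ∧ h₂ ω = y) =
      Pr p (fun ω => h₁ ω = x) * Pr p (fun ω => h₂ ω = y))
    (hV₁ : V p h₁ ≥ 0) (hV₂ : V p h₂ ≥ 0) :
    V p (fun ω => (h₁ ω + h₂ ω).sign) ≥ (V p h₁ + V p h₂) / 2 := by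
  set A := Pr p (fun ω => h₁ ω = 1) with hA
  set a := Pr p (fun ω => h₁ ω = -1) with ha
  set B := Pr p (fun ω => h₂ ω = 1) with hB
  set b := Pr p (fun ω => h₂ ω = -1) with hb
  have prnn : ∀ E : Ω → Prop, 0 ≤ Pr p E := fun E =>
    Finset.sum_nonneg fun ω _ => by by_cases h : E ω <;> simp [Pr, h, hp ω]
  -- splitting the sign events
  have hpos : Pr p (fun ω => (h₁ ω + h₂ ω).sign = 1) =
      Pr p (fun ω => h₁ ω = 1 ∧ h₂ ω = 1) + Pr p (fun ω => h₁ ω = 1 ∧ h₂ ω = 0)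
      + Pr p (fun ω => h₁ ω = 0 ∧ h₂ ω = 1) := by
    unfold Pr
    rw [← Finset.sum_add_distrib, ← Finset.sum_add_distrib]
    apply Finset.sum_congr rfl
    intro ω _
    rcases hr₁ ω with e1 | e1 | e1 <;> rcases hr₂ ω with e2 | e2 | e2 <;>
      simp [e1, e2, show ((2:ℤ).sign = 1) from rfl, show ((-2:ℤ).sign = -1) from rfl]
  have hneg : Pr p (fun ω => (h₁ ω + h₂ ω).sign = -1) =
      Pr p (fun ω => h₁ ω = -1 ∧ h₂ ω = -1) + Pr p (fun ω => h₁ ω = -1 ∧ h₂ ω = 0)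
      + Pr p (fun ω => h₁ ω = 0 ∧ h₂ ω = -1) := by
    unfold Pr
    rw [← Finset.sum_add_distrib, ← Finset.sum_add_distrib]
    apply Finset.sum_congr rfl
    intro ω _
    rcases hr₁ ω with e1 | e1 | e1 <;> rcases hr₂ ω with e2 | e2 | e2 <;>
      simp [e1, e2, show ((2:ℤ).sign = 1) from rfl, show ((-2:ℤ).sign = -1) from rfl]
  -- total probability for each variable
  have tot₁ : a + Pr p (fun ω => h₁ ω = 0) + A = 1 := by
    rw [ha, hA]
    unfold Pr
    rw [← Finset.sum_add_distrib, ← Finset.sum_add_distrib, ← hsum]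
    apply Finset.sum_congr rfl
    intro ω _
    rcases hr₁ ω with e1 | e1 | e1 <;> simp [e1]
  have tot₂ : b + Pr p (fun ω => h₂ ω = 0) + B = 1 := by
    rw [hb, hB]
    unfold Pr
    rw [← Finset.sum_add_distrib, ← Finset.sum_add_distrib, ← hsum]
    apply Finset.sum_congr rfl
    intro ω _
    rcases hr₂ ω with e2 | e2 | e2 <;> simp [e2]
  have hA0 := prnn (fun ω => h₁ ω = 1)
  have ha0 := prnn (fun ω => h₁ ω = -1)
  have hB0 := prnn (fun ω => h₂ ω = 1)
  have hb0 := prnn (fun ω => h₂ ω = -1)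
  have hz1 := prnn (fun ω => h₁ ω = 0)
  have hz2 := prnn (fun ω => h₂ ω = 0)
  have hA1 : A + a ≤ 1 := by linarith
  have hB1 : B + b ≤ 1 := by linarith
  have hV1' : A - a ≥ 0 := hV₁
  have hV2' : B - b ≥ 0 := hV₂
  show Pr p (fun ω => (h₁ ω + h₂ ω).sign = 1) - Pr p (fun ω => (h₁ ω + h₂ ω).sign = -1)
      ≥ ((A - a) + (B - b)) / 2
  rw [hpos, hneg, indep, indep, indep, indep, indep, indep]
  have e1 : Pr p (fun ω => h₁ ω = 0) = 1 - a - A := by linarith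
  have e2 : Pr p (fun ω => h₂ ω = 0) = 1 - b - B := by linarith
  rw [e1, e2]
  nlinarith [mul_nonneg hA0 hB0, mul_nonneg ha0 hb0,
    mul_nonneg (sub_nonneg.2 hA1) hV2', mul_nonneg (sub_nonneg.2 hB1) hV1']
end

section
/- Let Ω be a finite probability space and h₁, h₂ : Ω → {−1, 0, 1} independent random variables with P(h₁ = 0) = 0 and P(h₂ = 0) = 0. Let s = sign(h₁ + h₂) and V(X) = P(X = 1) − P(X = −1). Then V(s) = (V(h₁) + V(h₂))/2. -/
open scoped Classical

lemma Pr_congr' {Ω : Type*} [Fintype Ω] (p : Ω → ℝ) (hp : ∀ ω, 0 ≤ p ω) {E F : Ω → Prop}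
    (h : ∀ ω, 0 < p ω → (E ω ↔ F ω)) : Pr p E = Pr p F := by
  unfold Pr
  apply Finset.sum_congr rfl
  intro ω _
  by_cases hpω : 0 < p ω
  · simp [h ω hpω]
  · have h0 : p ω = 0 := le_antisymm (not_lt.mp hpω) (hp ω)
    split_ifs <;> simp [h0]

lemma Pr_zero_imp {Ω : Type*} [Fintype Ω] (p : Ω → ℝ) (hp : ∀ ω, 0 ≤ p ω)
    {E : Ω → Prop} (h : Pr p E = 0) : ∀ ω, E ω → p ω = 0 := by
  intro ω hE
  have := (Finset.sum_eq_zero_iff_of_nonneg (fun i _ => by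
    by_cases hi : E i <;> simp [hi, hp i])).mp h ω (Finset.mem_univ ω)
  simpa [hE] using this

lemma Pr_add' {Ω : Type*} [Fintype Ω] (p : Ω → ℝ) (E F : Ω → Prop)
    (hd : ∀ ω, ¬(E ω ∧ F ω)) :
    Pr p (fun ω => E ω ∨ F ω) = Pr p E + Pr p F := by
  unfold Pr
  rw [← Finset.sum_add_distrib]
  apply Finset.sum_congr rfl
  intro ω _
  by_cases hE : E ω <;> by_cases hF : F ω <;> simp [hE, hF] <;> exact absurd ⟨hE, hF⟩ (hd ω)

theorem stmt_12 {Ω : Type*} [Fintype Ω] (p : Ω → ℝ)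
    (hp : ∀ ω, 0 ≤ p ω) (hsum : ∑ ω, p ω = 1)
    (h₁ h₂ : Ω → ℤ)
    (hr₁ : ∀ ω, h₁ ω = -1 ∨ h₁ ω = 0 ∨ h₁ ω = 1)
    (hr₂ : ∀ ω, h₂ ω = -1 ∨ h₂ ω = 0 ∨ h₂ ω = 1)
    (indep : ∀ x y : ℤ, Pr p (fun ω => h₁ ω = x ∧ h₂ ω = y) =
      Pr p (fun ω => h₁ ω = x) * Pr p (fun ω => h₂ ω = y))
    (hz₁ : Pr p (fun ω => h₁ ω = 0) = 0)
    (hz₂ : Pr p (fun ω => h₂ ω = 0) = 0) :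
    V p (fun ω => (h₁ ω + h₂ ω).sign) = (V p h₁ + V p h₂) / 2 := by
  have key₁ : ∀ ω, 0 < p ω → h₁ ω ≠ 0 := fun ω hpω h0 => by
    have := Pr_zero_imp p hp hz₁ ω h0; linarith
  have key₂ : ∀ ω, 0 < p ω → h₂ ω ≠ 0 := fun ω hpω h0 => by
    have := Pr_zero_imp p hp hz₂ ω h0; linarith
  set a₁ := Pr p (fun ω => h₁ ω = 1)
  set b₁ := Pr p (fun ω => h₁ ω = -1)
  set a₂ := Pr p (fun ω => h₂ ω = 1)
  set b₂ := Pr p (fun ω => h₂ ω = -1)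
  have hs1 : Pr p (fun ω => (h₁ ω + h₂ ω).sign = 1) = a₁ * a₂ := by
    rw [← indep 1 1]
    apply Pr_congr' p hp
    intro ω hpω
    rcases hr₁ ω with h|h|h <;> rcases hr₂ ω with g|g|g <;>
      first
        | exact absurd h (key₁ ω hpω)
        | exact absurd g (key₂ ω hpω)
        | (simp [h, g]; try decide)
  have hsm1 : Pr p (fun ω => (h₁ ω + h₂ ω).sign = -1) = b₁ * b₂ := by
    rw [← indep (-1) (-1)]
    apply Pr_congr' p hp
    intro ω hpω
    rcases hr₁ ω with h|h|h <;> rcases hr₂ ω with g|g|g <;>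
      first
        | exact absurd h (key₁ ω hpω)
        | exact absurd g (key₂ ω hpω)
        | (simp [h, g]; try decide)
  have htot : Pr p (fun _ : Ω => True) = 1 := by simp [Pr, hsum]
  have hab₁ : a₁ + b₁ = 1 := by
    rw [← Pr_add' p _ _ (fun ω => by rintro ⟨h, g⟩; omega)] at *
    rw [← htot]
    apply Pr_congr' p hp
    intro ω hpω
    rcases hr₁ ω with h|h|h <;> simp_all
  have hab₂ : a₂ + b₂ = 1 := by
    rw [← Pr_add' p _ _ (fun ω => by rintro ⟨h, g⟩; omega)] at *
    rw [← htot]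
    apply Pr_congr' p hp
    intro ω hpω
    rcases hr₂ ω with h|h|h <;> simp_all
  show Pr p (fun ω => (h₁ ω + h₂ ω).sign = 1) - Pr p (fun ω => (h₁ ω + h₂ ω).sign = -1)
      = ((a₁ - b₁) + (a₂ - b₂)) / 2
  rw [hs1, hsm1]
  have e : a₁ * a₂ - b₁ * b₂ = a₁ + a₂ - 1 := by
    rw [show b₁ = 1 - a₁ by linarith, show b₂ = 1 - a₂ by linarith]; ring
  linarith
end

section
/- Let Ω be a finite probability space and h₁, h₂ : Ω → {−1, 0, 1} random variables (not necessarily independent) with P(h₁ = 0) = 0 and P(h₂ = 0) = 0. Let s = sign(h₁ + h₂) and V(X) = P(X = 1) − P(X = −1). Then V(s) = (V(h₁) + V(h₂))/2. -/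
open scoped Classical

theorem stmt_13 {Ω : Type*} [Fintype Ω] (p : Ω → ℝ)
    (hp : ∀ ω, 0 ≤ p ω) (hsum : ∑ ω, p ω = 1)
    (h₁ h₂ : Ω → ℤ)
    (hr₁ : ∀ ω, h₁ ω = -1 ∨ h₁ ω = 0 ∨ h₁ ω = 1)
    (hr₂ : ∀ ω, h₂ ω = -1 ∨ h₂ ω = 0 ∨ h₂ ω = 1)
    (hz₁ : Pr p (fun ω => h₁ ω = 0) = 0)
    (hz₂ : Pr p (fun ω => h₂ ω = 0) = 0) :
    V p (fun ω => (h₁ ω + h₂ ω).sign) = (V p h₁ + V p h₂) / 2 := by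
  have key : ∀ (X : Ω → ℤ) (hz : Pr p (fun ω => X ω = 0) = 0) (ω : Ω), X ω = 0 → p ω = 0 := by
    intro X hz ω h
    have hnn : ∀ ω ∈ Finset.univ, (0:ℝ) ≤ if X ω = 0 then p ω else 0 := by
      intro ω _; split <;> simp [hp ω]
    rw [Pr] at hz
    have heq : ∑ ω : Ω, (if X ω = 0 then p ω else 0) = 0 := by convert hz using 2 <;> congr
    have := (Finset.sum_eq_zero_iff_of_nonneg hnn).mp heq ω (Finset.mem_univ ω)
    simpa [h] using this
  unfold V Pr
  rw [← Finset.sum_sub_distrib, ← Finset.sum_sub_distrib, ← Finset.sum_sub_distrib,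
      ← Finset.sum_add_distrib, Finset.sum_div]
  apply Finset.sum_congr rfl
  intro ω _
  by_cases hpw : p ω = 0
  · split_ifs <;> simp [hpw]
  · have e1 : h₁ ω = -1 ∨ h₁ ω = 1 := by
      rcases hr₁ ω with h | h | h
      · left; exact h
      · exact absurd (key h₁ hz₁ ω h) hpw
      · right; exact h
    have e2 : h₂ ω = -1 ∨ h₂ ω = 1 := by
      rcases hr₂ ω with h | h | h
      · left; exact h
      · exact absurd (key h₂ hz₂ ω h) hpw
      · right; exact h
    have s1 : ((-1:ℤ) + -1).sign = -1 := by decide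
    have s2 : ((-1:ℤ) + 1).sign = 0 := by decide
    have s3 : ((1:ℤ) + -1).sign = 0 := by decide
    have s4 : ((1:ℤ) + 1).sign = 1 := by decide
    have s5 : Int.sign 2 = 1 := rfl
    rcases e1 with h1 | h1 <;> rcases e2 with h2 | h2 <;>
      simp [h1, h2, s1, s2, s3, s4, s5] <;> ring
end

section
/- Let Ω be a finite probability space and h₁, h₂ : Ω → {−1, 0, 1} random variables. Let s = sign(h₁ + h₂) and V(X) = P(X = 1) − P(X = −1). Then V(s) − (V(h₁)+V(h₂))/2 = (1/2)·[ P(h₁ = 0 ∧ h₂ = 1) − P(h₁ = 0 ∧ h₂ = −1) + P(h₂ = 0 ∧ h₁ = 1) − P(h₂ = 0 ∧ h₁ = −1) ]. -/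
open scoped Classical

theorem stmt_14 {Ω : Type*} [Fintype Ω] (p : Ω → ℝ)
    (hp : ∀ ω, 0 ≤ p ω) (hsum : ∑ ω, p ω = 1)
    (h₁ h₂ : Ω → ℤ)
    (hr₁ : ∀ ω, h₁ ω = -1 ∨ h₁ ω = 0 ∨ h₁ ω = 1)
    (hr₂ : ∀ ω, h₂ ω = -1 ∨ h₂ ω = 0 ∨ h₂ ω = 1) :
    V p (fun ω => (h₁ ω + h₂ ω).sign) - (V p h₁ + V p h₂) / 2 =
      (1 / 2) * (Pr p (fun ω => h₁ ω = 0 ∧ h₂ ω = 1) -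
        Pr p (fun ω => h₁ ω = 0 ∧ h₂ ω = -1) +
        Pr p (fun ω => h₂ ω = 0 ∧ h₁ ω = 1) -
        Pr p (fun ω => h₂ ω = 0 ∧ h₁ ω = -1)) := by
  simp only [V, Pr, ← Finset.sum_sub_distrib, ← Finset.sum_div,
    ← Finset.mul_sum, ← Finset.sum_add_distrib]
  rw [Finset.sum_div, ← Finset.sum_sub_distrib, Finset.mul_sum]
  apply Finset.sum_congr rfl
  intro ω _
  rcases hr₁ ω with h1 | h1 | h1 <;> rcases hr₂ ω with h2 | h2 | h2 <;>
    simp [h1, h2, show (2:ℤ).sign = 1 from rfl, show (-2:ℤ).sign = -1 from rfl] <;> ring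
end

section
/- Let Ω be a finite probability space and h₁, h₂ : Ω → {−1, 0, 1} random variables with s = sign(h₁ + h₂) and V(X) = P(X = 1) − P(X = −1). Then V(s) ≥ (V(h₁)+V(h₂))/2 if and only if P(h₁ = 0 ∧ h₂ = 1) + P(h₂ = 0 ∧ h₁ = 1) ≥ P(h₁ = 0 ∧ h₂ = −1) + P(h₂ = 0 ∧ h₁ = −1). -/
open scoped Classical

theorem stmt_15 {Ω : Type*} [Fintype Ω] (p : Ω → ℝ)
    (hp : ∀ ω, 0 ≤ p ω) (hsum : ∑ ω, p ω = 1)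
    (h₁ h₂ : Ω → ℤ)
    (hr₁ : ∀ ω, h₁ ω = -1 ∨ h₁ ω = 0 ∨ h₁ ω = 1)
    (hr₂ : ∀ ω, h₂ ω = -1 ∨ h₂ ω = 0 ∨ h₂ ω = 1) :
    V p (fun ω => (h₁ ω + h₂ ω).sign) ≥ (V p h₁ + V p h₂) / 2 ↔
      Pr p (fun ω => h₁ ω = 0 ∧ h₂ ω = 1) + Pr p (fun ω => h₂ ω = 0 ∧ h₁ ω = 1) ≥
        Pr p (fun ω => h₁ ω = 0 ∧ h₂ ω = -1) + Pr p (fun ω => h₂ ω = 0 ∧ h₁ ω = -1) := by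
  have key : 2 * V p (fun ω => (h₁ ω + h₂ ω).sign) - (V p h₁ + V p h₂)
      = (Pr p (fun ω => h₁ ω = 0 ∧ h₂ ω = 1) + Pr p (fun ω => h₂ ω = 0 ∧ h₁ ω = 1)) -
        (Pr p (fun ω => h₁ ω = 0 ∧ h₂ ω = -1) + Pr p (fun ω => h₂ ω = 0 ∧ h₁ ω = -1)) := by
    simp only [V, Pr, Finset.mul_sum, ← Finset.sum_sub_distrib, ← Finset.sum_add_distrib]
    apply Finset.sum_congr rfl
    intro ω _
    rcases hr₁ ω with h1|h1|h1 <;> rcases hr₂ ω with h2|h2|h2 <;>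
      simp [h1, h2] <;> norm_num [Int.sign] <;> ring
  constructor <;> intro h <;> linarith
end

section
/- Let Ω be a finite probability space and h₁, h₂ : Ω → {−1, 0, 1} random variables such that conditional on {h₁ = 0} (assumed of positive probability), h₂ = 1 is at least as likely as h₂ = −1, and conditional on {h₂ = 0} (assumed of positive probability), h₁ = 1 is at least as likely as h₁ = −1. Then with s = sign(h₁+h₂) and V(X) = P(X=1) − P(X=−1), we have V(s) ≥ (V(h₁)+V(h₂))/2. -/
open scoped Classical

theorem stmt_16 {Ω : Type*} [Fintype Ω] (p : Ω → ℝ)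
    (hp : ∀ ω, 0 ≤ p ω) (hsum : ∑ ω, p ω = 1)
    (h₁ h₂ : Ω → ℤ)
    (hr₁ : ∀ ω, h₁ ω = -1 ∨ h₁ ω = 0 ∨ h₁ ω = 1)
    (hr₂ : ∀ ω, h₂ ω = -1 ∨ h₂ ω = 0 ∨ h₂ ω = 1)
    (hpos₁ : 0 < Pr p (fun ω => h₁ ω = 0))
    (hpos₂ : 0 < Pr p (fun ω => h₂ ω = 0))
    (hc₁ : Pr p (fun ω => h₁ ω = 0 ∧ h₂ ω = 1) / Pr p (fun ω => h₁ ω = 0) ≥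
      Pr p (fun ω => h₁ ω = 0 ∧ h₂ ω = -1) / Pr p (fun ω => h₁ ω = 0))
    (hc₂ : Pr p (fun ω => h₂ ω = 0 ∧ h₁ ω = 1) / Pr p (fun ω => h₂ ω = 0) ≥
      Pr p (fun ω => h₂ ω = 0 ∧ h₁ ω = -1) / Pr p (fun ω => h₂ ω = 0)) :
    V p (fun ω => (h₁ ω + h₂ ω).sign) ≥ (V p h₁ + V p h₂) / 2 := by
  have key : ∀ ω, ((if (h₁ ω + h₂ ω).sign = 1 then p ω else 0) -
      (if (h₁ ω + h₂ ω).sign = -1 then p ω else 0)) * 2 -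
      (((if h₁ ω = 1 then p ω else 0) - (if h₁ ω = -1 then p ω else 0)) +
       ((if h₂ ω = 1 then p ω else 0) - (if h₂ ω = -1 then p ω else 0))) =
      ((if h₁ ω = 0 ∧ h₂ ω = 1 then p ω else 0) -
       (if h₁ ω = 0 ∧ h₂ ω = -1 then p ω else 0)) +
      ((if h₂ ω = 0 ∧ h₁ ω = 1 then p ω else 0) -
       (if h₂ ω = 0 ∧ h₁ ω = -1 then p ω else 0)) := by
    intro ω
    rcases hr₁ ω with a | a | a <;> rcases hr₂ ω with b | b | b <;>
      simp [a, b, show (2:ℤ).sign = 1 from rfl, show (-2:ℤ).sign = -1 from rfl] <;> ring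
  have E : V p (fun ω => (h₁ ω + h₂ ω).sign) * 2 - (V p h₁ + V p h₂) =
      (Pr p (fun ω => h₁ ω = 0 ∧ h₂ ω = 1) - Pr p (fun ω => h₁ ω = 0 ∧ h₂ ω = -1)) +
      (Pr p (fun ω => h₂ ω = 0 ∧ h₁ ω = 1) - Pr p (fun ω => h₂ ω = 0 ∧ h₁ ω = -1)) := by
    simp only [V, Pr, Finset.sum_mul, ← Finset.sum_sub_distrib, ← Finset.sum_add_distrib]
    exact Finset.sum_congr rfl fun ω _ => by convert key ω using 2 <;> congr!
  have hA : Pr p (fun ω => h₁ ω = 0 ∧ h₂ ω = -1) ≤ Pr p (fun ω => h₁ ω = 0 ∧ h₂ ω = 1) := by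
    rw [ge_iff_le, div_le_div_iff₀ hpos₁ hpos₁] at hc₁
    nlinarith [hpos₁]
  have hB : Pr p (fun ω => h₂ ω = 0 ∧ h₁ ω = -1) ≤ Pr p (fun ω => h₂ ω = 0 ∧ h₁ ω = 1) := by
    rw [ge_iff_le, div_le_div_iff₀ hpos₂ hpos₂] at hc₂
    nlinarith [hpos₂]
  linarith
end

section
/- Let a₁,b₁,c₁,a₂,b₂,c₂ be nonnegative reals with a₁+b₁+c₁=1, a₂+b₂+c₂=1, and suppose b₁ > 0, a₂ > c₂, and a₁ ≥ c₁ (or symmetrically b₂ > 0, a₁ > c₁, a₂ ≥ c₂). Then (a₁a₂ + a₁b₂ + a₂b₁) − (c₁c₂ + c₁b₂ + c₂b₁) > ((a₁−c₁)+(a₂−c₂))/2. -/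
theorem stmt_17 (a₁ b₁ c₁ a₂ b₂ c₂ : ℝ)
    (ha₁ : 0 ≤ a₁) (hb₁ : 0 ≤ b₁) (hc₁ : 0 ≤ c₁)
    (ha₂ : 0 ≤ a₂) (hb₂ : 0 ≤ b₂) (hc₂ : 0 ≤ c₂)
    (h1 : a₁ + b₁ + c₁ = 1) (h2 : a₂ + b₂ + c₂ = 1)
    (hyp : (b₁ > 0 ∧ a₂ > c₂ ∧ a₁ ≥ c₁) ∨ (b₂ > 0 ∧ a₁ > c₁ ∧ a₂ ≥ c₂)) :
    (a₁ * a₂ + a₁ * b₂ + a₂ * b₁) - (c₁ * c₂ + c₁ * b₂ + c₂ * b₁) >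
      ((a₁ - c₁) + (a₂ - c₂)) / 2 := by
  rcases hyp with ⟨h, h', h''⟩ | ⟨h, h', h''⟩ <;>
    nlinarith [mul_pos h (sub_pos.mpr h'), mul_pos h (sub_pos.mpr h'),
      mul_nonneg hb₂ (sub_nonneg.mpr h''), mul_nonneg hb₁ (sub_nonneg.mpr h'')]
end

section
/- Let a₁,b₁,c₁,a₂,b₂,c₂ be nonnegative reals with a₁+b₁+c₁=1 and a₂+b₂+c₂=1, and suppose the collective decision has positive synergy: (a₁a₂ + a₁b₂ + a₂b₁) − (c₁c₂ + c₁b₂ + c₂b₁) > ((a₁−c₁)+(a₂−c₂))/2. Then b₁ > 0 or b₂ > 0. -/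
theorem stmt_18 (a₁ b₁ c₁ a₂ b₂ c₂ : ℝ)
    (ha₁ : 0 ≤ a₁) (hb₁ : 0 ≤ b₁) (hc₁ : 0 ≤ c₁)
    (ha₂ : 0 ≤ a₂) (hb₂ : 0 ≤ b₂) (hc₂ : 0 ≤ c₂)
    (h1 : a₁ + b₁ + c₁ = 1) (h2 : a₂ + b₂ + c₂ = 1)
    (hsyn : (a₁ * a₂ + a₁ * b₂ + a₂ * b₁) - (c₁ * c₂ + c₁ * b₂ + c₂ * b₁) >
      ((a₁ - c₁) + (a₂ - c₂)) / 2) :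
    b₁ > 0 ∨ b₂ > 0 := by
  by_contra h
  push_neg at h
  obtain ⟨h1', h2'⟩ := h
  have hb1 : b₁ = 0 := le_antisymm h1' hb₁
  have hb2 : b₂ = 0 := le_antisymm h2' hb₂
  subst hb1 hb2
  nlinarith [hsyn, h1, h2]
end
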